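/- Let N > 5040 be an integer and p a prime not dividing N with p < N. Then G(N) > G(Np) if and only if p·(log p)·(1 + Σ_{k≥1} ((−1)^k/(k+1))·(log p/log N)^k) > log N · log log N. -/

import Mathlib

/-- `G n = σ(n) / (n * log log n)`. -/
noncomputable def G (n : ℕ) : ℝ :=
  (∑ d ∈ n.divisors, (d : ℝ)) / (n * Real.log (Real.log n))

theorem stmt_10 (N p : ℕ) (hN : N > 5040) (hp : p.Prime) (hpN : ¬ p ∣ N)
    (hlt : p < N) :
    G N > G (N * p) ↔
      (p : ℝ) * Real.log p *
          (1 + ∑' k : ℕ,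
            ((-1 : ℝ) ^ (k + 1) / ((k : ℝ) + 2)) * (Real.log p / Real.log N) ^ (k + 1)) >
        Real.log N * Real.log (Real.log N) := by
  have hp2 : 2 ≤ p := hp.two_le
  have hN0 : (0:ℝ) < N := by positivity
  have hNcast : (5041:ℝ) ≤ N := by exact_mod_cast hN
  have hp0 : (0:ℝ) < p := by positivity
  have hlogN : (1:ℝ) < Real.log N := by
    rw [show (1:ℝ) = Real.log (Real.exp 1) by simp]
    apply Real.log_lt_log (Real.exp_pos 1)
    have := Real.exp_one_lt_d9
    linarith
  have hlogN0 : (0:ℝ) < Real.log N := by linarith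
  have hL : 0 < Real.log (Real.log N) := Real.log_pos hlogN
  have hp1 : (1:ℝ) < p := by exact_mod_cast hp.one_lt
  have hlogp : 0 < Real.log p := Real.log_pos hp1
  set x := Real.log p / Real.log N with hxdef
  have hx0 : 0 < x := div_pos hlogp hlogN0
  have hx1 : x < 1 := by
    rw [hxdef, div_lt_one hlogN0]
    exact Real.log_lt_log hp0 (by exact_mod_cast hlt)
  have hxlog : x * Real.log N = Real.log p := by
    rw [hxdef]; field_simp
  have h1x : (0:ℝ) < 1 + x := by linarith
  have hlog1x : 0 < Real.log (1 + x) := Real.log_pos (by linarith)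
  -- series computation
  have habs : |(-x)| < 1 := by rw [abs_neg, abs_of_pos hx0]; exact hx1
  have h1 := Real.hasSum_pow_div_log_of_abs_lt_one habs
  rw [sub_neg_eq_add] at h1
  have h2 : HasSum (fun n : ℕ => (-x) ^ (n + 1 + 1) / ((n:ℝ) + 1 + 1))
      (-Real.log (1 + x) + x) := by
    have h2' := (hasSum_nat_add_iff' (f := fun n : ℕ => (-x) ^ (n + 1) / ((n:ℝ) + 1)) 1).2 h1
    have hsum1 : (∑ i ∈ Finset.range 1, (-x) ^ (i + 1) / ((i:ℝ) + 1)) = -x := by simp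
    rw [hsum1, sub_neg_eq_add] at h2'
    have e : (fun n : ℕ => (-x) ^ (n + 1 + 1) / ((n:ℝ) + 1 + 1))
        = fun n : ℕ => (-x) ^ ((n + 1) + 1) / (((n + 1 : ℕ) : ℝ) + 1) := by
      funext n; push_cast; ring
    rw [e]; exact h2'
  have h3 : HasSum (fun k : ℕ => ((-1 : ℝ) ^ (k + 1) / ((k : ℝ) + 2)) * x ^ (k + 1))
      ((-Real.log (1 + x) + x) * (-1 / x)) := by
    have h := h2.mul_right (-1 / x)
    have e : (fun k : ℕ => ((-1 : ℝ) ^ (k + 1) / ((k : ℝ) + 2)) * x ^ (k + 1))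
        = fun i : ℕ => (-x) ^ (i + 1 + 1) / ((i:ℝ) + 1 + 1) * (-1 / x) := by
      funext k
      have hk : ((k:ℝ) + 2) ≠ 0 := by positivity
      rw [neg_pow]
      field_simp
      ring
    rw [e]; exact h
  have htsum : (∑' k : ℕ, ((-1 : ℝ) ^ (k + 1) / ((k : ℝ) + 2)) * x ^ (k + 1))
      = Real.log (1 + x) / x - 1 := by
    rw [h3.tsum_eq]
    field_simp
    ring
  have hrhs : (p : ℝ) * Real.log p * (1 + (Real.log (1 + x) / x - 1))
      = (p:ℝ) * Real.log N * Real.log (1 + x) := by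
    rw [← hxlog]
    field_simp
    ring
  -- compute pieces of G (N*p)
  have hcop : N.Coprime p := ((hp.coprime_iff_not_dvd).mpr hpN).symm
  have hsum_p : ∑ d ∈ p.divisors, d = 1 + p := by
    rw [hp.divisors, Finset.sum_insert (by simp [hp.ne_one, Ne.symm hp.ne_one]),
      Finset.sum_singleton]
  have hS : (∑ d ∈ (N*p).divisors, (d:ℝ)) = (∑ d ∈ N.divisors, (d:ℝ)) * (1 + p) := by
    have h := Nat.Coprime.sum_divisors_mul hcop
    rw [hsum_p] at h
    have h' := congrArg (fun n : ℕ => (n : ℝ)) h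
    push_cast at h'
    exact h'
  have hNP0 : ((N*p:ℕ):ℝ) = (N:ℝ)*(p:ℝ) := by push_cast; ring
  have hloglogNp : Real.log (Real.log ((N*p:ℕ):ℝ)) = Real.log (Real.log N) + Real.log (1+x) := by
    rw [hNP0, Real.log_mul (ne_of_gt hN0) (ne_of_gt hp0)]
    rw [show Real.log N + Real.log p = Real.log N * (1+x) by rw [← hxlog]; ring]
    rw [Real.log_mul (ne_of_gt hlogN0) (ne_of_gt h1x)]
  have hSpos : 0 < ∑ d ∈ N.divisors, (d:ℝ) := by
    apply Finset.sum_pos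
    · intro i hi; exact_mod_cast Nat.pos_of_mem_divisors hi
    · exact ⟨N, Nat.mem_divisors_self N (by omega)⟩
  rw [htsum, hrhs]
  unfold G
  rw [hS, hloglogNp, hNP0]
  set S := ∑ d ∈ N.divisors, (d:ℝ) with hSdef
  set L := Real.log (Real.log N) with hLdef
  set c := Real.log (1+x) with hcdef
  rw [gt_iff_lt, gt_iff_lt, div_lt_div_iff₀ (by positivity) (by positivity)]
  rw [show S*(1+(p:ℝ)) * ((N:ℝ)*L) = (S*N)*((1+(p:ℝ))*L) by ring,
    show S * (((N:ℝ)*(p:ℝ))*(L+c)) = (S*N)*((p:ℝ)*(L+c)) by ring,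
    mul_lt_mul_iff_right₀ (by positivity)]
  constructor
  · intro h
    have h2 : L < (p:ℝ) * c := by nlinarith
    calc Real.log N * L < Real.log N * ((p:ℝ) * c) := mul_lt_mul_of_pos_left h2 hlogN0
      _ = (p:ℝ) * Real.log N * c := by ring
  · intro h
    have h' : Real.log N * L < Real.log N * ((p:ℝ)*c) := by
      rw [show Real.log N * ((p:ℝ)*c) = (p:ℝ)*Real.log N*c by ring]; exact h
    have h2 := (mul_lt_mul_iff_right₀ hlogN0).mp h'
    nlinarith
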